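/- arXiv:0912.3589 — 3 statements merged into one kernel-verified Lean document; each statement's English description precedes it below -/
import Mathlib

section
/- Let φ = (φ_x, φ_y, φ_z) ∈ ℝ³ be a unit vector with φ_z ≠ 0 and let r > 0. Then the matrix C(φ, r) := (r²/4)·[[1 − φ_x², −φ_x φ_y], [−φ_x φ_y, 1 − φ_y²]] is symmetric positive definite, and the image of Circle(φ, r) under the orthogonal projection P along the z-axis equals the solid ellipse E(0, C(φ, r)). -/
open Matrix

set_option maxHeartbeats 1600000

/-- For a unit vector φ ∈ ℝ³ with φ_z ≠ 0 and r > 0, the matrix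
C(φ,r) = (r²/4)·[[1 − φx², −φxφy], [−φxφy, 1 − φy²]] is symmetric positive
definite, and the image of the solid circle Circle(φ,r) = {x : ‖x‖ ≤ r, x·φ = 0}
under the orthogonal projection (x,y,z) ↦ (x,y) equals the solid ellipse
E(0, C) = {p : pᵀ C⁻¹ p ≤ 4}. -/
theorem proj_circle_eq_ellipse
    (φ : Fin 3 → ℝ) (hunit : φ ⬝ᵥ φ = 1) (hz : φ 2 ≠ 0) (r : ℝ) (hr : 0 < r)
    (C : Matrix (Fin 2) (Fin 2) ℝ)
    (hC : C = (r ^ 2 / 4) •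
      !![1 - φ 0 ^ 2, -(φ 0 * φ 1); -(φ 0 * φ 1), 1 - φ 1 ^ 2]) :
    C.IsSymm ∧ C.PosDef ∧
    (fun x : Fin 3 → ℝ => (![x 0, x 1] : Fin 2 → ℝ)) ''
        {x : Fin 3 → ℝ | Real.sqrt (x ⬝ᵥ x) ≤ r ∧ x ⬝ᵥ φ = 0} =
      {p : Fin 2 → ℝ | (p - 0) ⬝ᵥ C⁻¹ *ᵥ (p - 0) ≤ 4} := by
  set a := φ 0 with ha
  set b := φ 1 with hb
  set c := φ 2 with hcdef
  have hsum : a ^ 2 + b ^ 2 + c ^ 2 = 1 := by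
    have := hunit
    simp only [dotProduct, Fin.sum_univ_three] at this
    nlinarith [this]
  have hc2 : (0:ℝ) < c ^ 2 := by positivity
  have hr2 : (0:ℝ) < r ^ 2 := by positivity
  have hk : (0:ℝ) < r ^ 2 / 4 * c ^ 2 := by positivity
  -- explicit inverse
  have hCinv : C⁻¹ = (r ^ 2 / 4 * c ^ 2)⁻¹ •
      !![1 - b ^ 2, a * b; a * b, 1 - a ^ 2] := by
    apply inv_eq_right_inv
    subst hC
    ext i j
    fin_cases i <;> fin_cases j <;>
      simp [Matrix.mul_apply, Fin.sum_univ_two, Matrix.smul_apply, Matrix.one_apply] <;>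
      field_simp <;> nlinarith [hsum]
  -- quadratic form of the inverse
  have hform : ∀ p : Fin 2 → ℝ, (p - 0) ⬝ᵥ C⁻¹ *ᵥ (p - 0) =
      (r ^ 2 / 4 * c ^ 2)⁻¹ *
        ((1 - b ^ 2) * p 0 ^ 2 + 2 * (a * b) * p 0 * p 1 + (1 - a ^ 2) * p 1 ^ 2) := by
    intro p
    simp [hCinv, dotProduct, Matrix.mulVec, Fin.sum_univ_two, Matrix.smul_apply]
    ring
  refine ⟨?_, ?_, ?_⟩
  · rw [Matrix.IsSymm, hC]
    ext i j
    fin_cases i <;> fin_cases j <;> simp [Matrix.transpose_apply]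
  · rw [Matrix.posDef_iff_dotProduct_mulVec]
    constructor
    · show Cᴴ = C
      rw [hC]
      ext i j
      fin_cases i <;> fin_cases j <;> simp
    · intro x hx
      have hx2 : (0:ℝ) < x 0 ^ 2 + x 1 ^ 2 := by
        have h01 : x 0 ≠ 0 ∨ x 1 ≠ 0 := by
          by_contra h
          push_neg at h
          exact hx (funext fun i => by fin_cases i <;> simp [h.1, h.2])
        rcases h01 with h | h
        · nlinarith [sq_nonneg (x 1), sq_pos_of_ne_zero h]
        · nlinarith [sq_nonneg (x 0), sq_pos_of_ne_zero h]
      have hstar : star x = x := by simp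
      rw [hstar]
      have : x ⬝ᵥ C *ᵥ x =
          r ^ 2 / 4 * ((1 - a ^ 2) * x 0 ^ 2 - 2 * (a * b) * x 0 * x 1
            + (1 - b ^ 2) * x 1 ^ 2) := by
        simp [hC, dotProduct, Matrix.mulVec, Fin.sum_univ_two, Matrix.smul_apply]
        ring
      rw [this]
      have hkey : (1 - a ^ 2) * x 0 ^ 2 - 2 * (a * b) * x 0 * x 1
          + (1 - b ^ 2) * x 1 ^ 2 = c ^ 2 * (x 0 ^ 2 + x 1 ^ 2)
            + (b * x 0 - a * x 1) ^ 2 := by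
        linear_combination (-(x 0 ^ 2) - x 1 ^ 2) * hsum
      rw [hkey]
      have h1 : (0:ℝ) < c ^ 2 * (x 0 ^ 2 + x 1 ^ 2) := mul_pos hc2 hx2
      nlinarith [sq_nonneg (b * x 0 - a * x 1)]
  · ext p
    simp only [Set.mem_image, Set.mem_setOf_eq]
    constructor
    · rintro ⟨x, ⟨hnorm, horth⟩, rfl⟩
      have hxx : x ⬝ᵥ x ≤ r ^ 2 := by
        have h0 : (0:ℝ) ≤ x ⬝ᵥ x := by
          simp only [dotProduct, Fin.sum_univ_three]
          nlinarith [sq_nonneg (x 0), sq_nonneg (x 1), sq_nonneg (x 2)]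
        nlinarith [Real.sq_sqrt h0, Real.sqrt_nonneg (x ⬝ᵥ x), hnorm, hr.le]
      have hxx' : x 0 ^ 2 + x 1 ^ 2 + x 2 ^ 2 ≤ r ^ 2 := by
        simpa [dotProduct, Fin.sum_univ_three, sq] using hxx
      have ho : x 0 * a + x 1 * b + x 2 * c = 0 := by
        simpa [dotProduct, Fin.sum_univ_three] using horth
      rw [hform]
      rw [inv_mul_le_iff₀ hk]
      have hQ : (1 - b ^ 2) * x 0 ^ 2 + 2 * (a * b) * x 0 * x 1
          + (1 - a ^ 2) * x 1 ^ 2 = c ^ 2 * (x 0 ^ 2 + x 1 ^ 2 + x 2 ^ 2) := by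
        linear_combination (x 0 * a + x 1 * b - x 2 * c) * ho
          - (x 0 ^ 2 + x 1 ^ 2) * hsum
      have key : (1 - b ^ 2) * x 0 ^ 2 + 2 * (a * b) * x 0 * x 1
          + (1 - a ^ 2) * x 1 ^ 2 ≤ r ^ 2 * c ^ 2 := by
        rw [hQ]
        nlinarith [mul_le_mul_of_nonneg_left hxx' hc2.le]
      simpa [Matrix.cons_val_zero, Matrix.cons_val_one] using le_trans key (by nlinarith)
    · intro hp
      refine ⟨![p 0, p 1, -(a * p 0 + b * p 1) / c], ⟨?_, ?_⟩, ?_⟩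
      · have hq : (1 - b ^ 2) * p 0 ^ 2 + 2 * (a * b) * p 0 * p 1
            + (1 - a ^ 2) * p 1 ^ 2 ≤ r ^ 2 * c ^ 2 := by
          rw [hform, inv_mul_le_iff₀ hk] at hp
          nlinarith [hp]
        have hxx : (![p 0, p 1, -(a * p 0 + b * p 1) / c] : Fin 3 → ℝ) ⬝ᵥ
            ![p 0, p 1, -(a * p 0 + b * p 1) / c] ≤ r ^ 2 := by
          simp only [dotProduct, Fin.sum_univ_three, Matrix.cons_val_zero,
            Matrix.cons_val_one, Matrix.head_cons, Matrix.cons_val_two, Matrix.tail_cons]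
          rw [div_mul_div_comm]
          have hc2' : (0:ℝ) < c * c := by nlinarith [hc2]
          have hid : (p 0 * p 0 + p 1 * p 1) * (c * c)
              + -(a * p 0 + b * p 1) * -(a * p 0 + b * p 1) =
              (1 - b ^ 2) * p 0 ^ 2 + 2 * (a * b) * p 0 * p 1
                + (1 - a ^ 2) * p 1 ^ 2 := by
            linear_combination (p 0 ^ 2 + p 1 ^ 2) * hsum
          have hgoal : p 0 * p 0 + p 1 * p 1
              + -(a * p 0 + b * p 1) * -(a * p 0 + b * p 1) / (c * c) =
              ((p 0 * p 0 + p 1 * p 1) * (c * c)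
                + -(a * p 0 + b * p 1) * -(a * p 0 + b * p 1)) / (c * c) := by
            field_simp
          rw [hgoal, div_le_iff₀ hc2', hid]
          nlinarith [hq]
        calc Real.sqrt _ ≤ Real.sqrt (r ^ 2) := Real.sqrt_le_sqrt hxx
          _ = r := by rw [Real.sqrt_sq hr.le]
      · simp only [dotProduct, Fin.sum_univ_three, Matrix.cons_val_zero,
          Matrix.cons_val_one, Matrix.head_cons, Matrix.cons_val_two, Matrix.tail_cons,
          ← ha, ← hb, ← hcdef]
        field_simp
        ring
      · funext i
        fin_cases i <;> simp
end

section
/- Let C ∈ ℝ^{2×2} be symmetric positive definite with eigenvalues λ₁ > λ₂ > 0, and set a₁ := 2√λ₁. Then (i) for any unit vector ψ ∈ ℝ³ with ψ_z ≠ 0 and any r > 0, the equality C = (r²/4)·[[1 − ψ_x², −ψ_x ψ_y], [−ψ_x ψ_y, 1 − ψ_y²]] forces r = a₁; and (ii) there are exactly two unit vectors ψ ∈ ℝ³ with ψ_z < 0 satisfying C = (a₁²/4)·[[1 − ψ_x², −ψ_x ψ_y], [−ψ_x ψ_y, 1 − ψ_y²]], and they are related by (ψ_x, ψ_y, ψ_z)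 ↦ (−ψ_x, −ψ_y, ψ_z). -/
open Matrix

set_option maxHeartbeats 1000000 in
/-- Let C be symmetric positive definite with eigenvalues
λ₁ > λ₂ > 0 and a₁ := 2√λ₁. Then (i) any representation
C = (r²/4)·[[1 − ψx², −ψxψy], [−ψxψy, 1 − ψy²]] with ψ a unit vector, ψ_z ≠ 0
and r > 0 forces r = a₁; and (ii) there are exactly two unit vectors ψ with
ψ_z < 0 satisfying C = (a₁²/4)·[[1 − ψx², −ψxψy], [−ψxψy, 1 − ψy²]], and they
are related by (ψx, ψy, ψz) ↦ (−ψx, −ψy, ψz). -/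
theorem two_fold_normal_ambiguity
    (C : Matrix (Fin 2) (Fin 2) ℝ) (hsym : C.IsSymm) (hpd : C.PosDef)
    (l₁ l₂ : ℝ) (hspec : spectrum ℝ C = {l₁, l₂}) (h12 : l₂ < l₁) (h2 : 0 < l₂)
    (a₁ : ℝ) (ha₁ : a₁ = 2 * Real.sqrt l₁) :
    (∀ (ψ : Fin 3 → ℝ) (r : ℝ), ψ ⬝ᵥ ψ = 1 → ψ 2 ≠ 0 → 0 < r →
      C = (r ^ 2 / 4) •
        !![1 - ψ 0 ^ 2, -(ψ 0 * ψ 1); -(ψ 0 * ψ 1), 1 - ψ 1 ^ 2] → r = a₁) ∧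
    (∃ ψ ψ' : Fin 3 → ℝ, ψ' = ![-ψ 0, -ψ 1, ψ 2] ∧ ψ ≠ ψ' ∧
      (ψ ⬝ᵥ ψ = 1 ∧ ψ 2 < 0 ∧
        C = (a₁ ^ 2 / 4) •
          !![1 - ψ 0 ^ 2, -(ψ 0 * ψ 1); -(ψ 0 * ψ 1), 1 - ψ 1 ^ 2]) ∧
      (ψ' ⬝ᵥ ψ' = 1 ∧ ψ' 2 < 0 ∧
        C = (a₁ ^ 2 / 4) •
          !![1 - ψ' 0 ^ 2, -(ψ' 0 * ψ' 1); -(ψ' 0 * ψ' 1), 1 - ψ' 1 ^ 2]) ∧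
      ∀ χ : Fin 3 → ℝ, χ ⬝ᵥ χ = 1 → χ 2 < 0 →
        C = (a₁ ^ 2 / 4) •
          !![1 - χ 0 ^ 2, -(χ 0 * χ 1); -(χ 0 * χ 1), 1 - χ 1 ^ 2] →
        χ = ψ ∨ χ = ψ') := by
  have hl1 : (0:ℝ) < l₁ := h2.trans h12
  have hl1ne : l₁ ≠ 0 := ne_of_gt hl1
  have hC10 : C 1 0 = C 0 1 := by
    have h := hsym
    rw [Matrix.IsSymm] at h
    exact (congrFun (congrFun h 0) 1).symm ▸ rfl
  set p := C 0 0 with hpdef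
  set q := C 0 1 with hqdef
  set s := C 1 1 with hsdef
  have root : ∀ l ∈ spectrum ℝ C, (l - p) * (l - s) - q * q = 0 := by
    intro l hl
    rw [spectrum.mem_iff, Matrix.isUnit_iff_isUnit_det, isUnit_iff_ne_zero, not_not,
      Matrix.det_fin_two] at hl
    simp [Matrix.algebraMap_matrix_apply, hC10] at hl
    linear_combination hl
  have e1 := root l₁ (by rw [hspec]; simp)
  have e2 := root l₂ (by rw [hspec]; simp)
  have hfac : (l₁ - l₂) * (l₁ + l₂ - (p + s)) = 0 := by linear_combination e1 - e2
  have htr : p + s = l₁ + l₂ := by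
    rcases mul_eq_zero.mp hfac with h | h
    · exact absurd h (sub_ne_zero.mpr (ne_of_gt h12))
    · linarith
  have hdet : p * s - q * q = l₁ * l₂ := by linear_combination e1 + l₁ * htr
  have ha1sq : a₁ ^ 2 = 4 * l₁ := by
    rw [ha₁, mul_pow, Real.sq_sqrt hl1.le]; ring
  have ha1pos : 0 < a₁ := by
    rw [ha₁]; positivity
  constructor
  · -- part (i)
    intro ψ r hunit hz hr hC
    have h00 := congrFun (congrFun hC 0) 0
    have h01 := congrFun (congrFun hC 0) 1
    have h11 := congrFun (congrFun hC 1) 1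
    simp [Matrix.smul_apply] at h00 h01 h11
    have hunit' : ψ 0 ^ 2 + ψ 1 ^ 2 + ψ 2 ^ 2 = 1 := by
      simpa [dotProduct, Fin.sum_univ_three, sq] using hunit
    clear hC hsym hpd hspec root hfac e1 e2
    have hupos : 0 < r ^ 2 / 4 := by positivity
    set u := r ^ 2 / 4 with hu
    clear_value u
    have h1 : u * (1 + ψ 2 ^ 2) = l₁ + l₂ := by
      rw [← htr]; linear_combination -h00 - h11 + u * hunit'
    have h2' : u ^ 2 * ψ 2 ^ 2 = l₁ * l₂ := by
      rw [← hdet]; linear_combination (-s) * h00 - (u * (1 - ψ 0 ^ 2)) * h11 + (q - u * ψ 0 * ψ 1) * h01 + u ^ 2 * hunit'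
    have hfac2 : (u - l₁) * (u - l₂) = 0 := by linear_combination u * h1 - h2'
    have hw1 : ψ 2 ^ 2 ≤ 1 := by nlinarith [sq_nonneg (ψ 0), sq_nonneg (ψ 1)]
    have hwpos : 0 < ψ 2 ^ 2 := by positivity
    have hul : u = l₁ := by
      rcases mul_eq_zero.mp hfac2 with h | h
      · linarith [sub_eq_zero.mp h]
      · exfalso
        have hu2 : u = l₂ := by linarith
        have hle : u ^ 2 * ψ 2 ^ 2 ≤ u ^ 2 := by nlinarith [sq_nonneg u]
        have hu2sq : u ^ 2 = l₂ ^ 2 := by rw [hu2]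
        have hlt : l₂ ^ 2 < l₁ * l₂ := by nlinarith
        linarith
    have hr2 : r ^ 2 = a₁ ^ 2 := by rw [ha1sq]; rw [hu] at hul; linarith
    have hfr : (r - a₁) * (r + a₁) = 0 := by linear_combination hr2
    rcases mul_eq_zero.mp hfr with h | h
    · linarith
    · linarith
  · -- part (ii)
    clear hsym hpd hspec root hfac e1 e2
    have hCform : C = !![p, q; q, s] := by
      ext i j
      fin_cases i <;> fin_cases j <;> simp [hC10] <;> rfl
    rw [hCform]
    clear_value p q s
    clear hC10 hCform hpdef hqdef hsdef
    have key : (l₁ - p) * (l₁ - s) = q ^ 2 := by linear_combination hdet - l₁ * htr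
    set t := l₂ / l₁ with htdef
    set α := 1 - p / l₁ with hαdef
    set β := 1 - s / l₁ with hβdef
    have htl : l₁ * t = l₂ := by rw [htdef]; field_simp
    have hαl : l₁ * α = l₁ - p := by rw [hαdef]; field_simp
    have hβl : l₁ * β = l₁ - s := by rw [hβdef]; field_simp
    clear_value t α β
    clear htdef hαdef hβdef
    have htpos : 0 < t := by nlinarith [htl, h2, hl1]
    have ht1 : t < 1 := by nlinarith [htl, h12, hl1]
    have hsum : α + β = 1 - t :=
      mul_left_cancel₀ hl1ne (by linear_combination hαl + hβl - htr + htl)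
    have hprodm : l₁ ^ 2 * (α * β) = q ^ 2 := by
      linear_combination (l₁ * β) * hαl + (l₁ - p) * hβl + key
    have hprodnn : 0 ≤ α * β := by
      by_contra h
      push_neg at h
      have h1 : l₁ ^ 2 * (α * β) < 0 := mul_neg_of_pos_of_neg (by positivity) h
      linarith [sq_nonneg q, hprodm, h1]
    have hαnn : 0 ≤ α := by
      by_contra h
      push_neg at h
      have hβpos : 0 < β := by linarith
      linarith [mul_neg_of_neg_of_pos h hβpos]
    have hβnn : 0 ≤ β := by
      by_contra h
      push_neg at h
      have hαpos : 0 < α := by linarith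
      linarith [mul_neg_of_pos_of_neg hαpos h]
    have hq0 : α = 0 → q = 0 := by
      intro h0
      have : q ^ 2 = 0 := by rw [← hprodm, h0]; ring
      exact (pow_eq_zero_iff two_ne_zero).mp this
    set sa := Real.sqrt α with hsadef
    set sb := if α = 0 then Real.sqrt β else -q / (l₁ * Real.sqrt α) with hsbdef
    set sc := -Real.sqrt t with hscdef
    have h0sq : sa ^ 2 = α := Real.sq_sqrt hαnn
    have hsbsq : sb ^ 2 = β := by
      rw [hsbdef]
      by_cases hα0 : α = 0
      · rw [if_pos hα0]; exact Real.sq_sqrt hβnn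
      · rw [if_neg hα0, div_pow, mul_pow, Real.sq_sqrt hαnn, neg_pow, div_eq_iff
          (by positivity : l₁ ^ 2 * α ≠ 0)]
        linear_combination -hprodm
    have hpr : l₁ * (sa * sb) = -q := by
      rw [hsadef, hsbdef]
      by_cases hα0 : α = 0
      · rw [if_pos hα0, hα0, Real.sqrt_zero, hq0 hα0]; ring
      · rw [if_neg hα0]
        have hαpos : 0 < α := lt_of_le_of_ne hαnn (Ne.symm hα0)
        have hsapos : 0 < Real.sqrt α := Real.sqrt_pos.mpr hαpos
        field_simp
    have hscsq : sc ^ 2 = t := by rw [hscdef, neg_pow, Real.sq_sqrt htpos.le]; ring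
    have hscneg : sc < 0 := by
      rw [hscdef, neg_lt, neg_zero]; exact Real.sqrt_pos.mpr htpos
    have hsum1 : sa ^ 2 + sb ^ 2 + sc ^ 2 = 1 := by
      rw [h0sq, hsbsq, hscsq]; linarith
    clear_value sa sb sc
    clear hsadef hsbdef hscdef
    refine ⟨![sa, sb, sc], ![-sa, -sb, sc], ?_, ?_, ⟨?_, ?_, ?_⟩, ⟨?_, ?_, ?_⟩, ?_⟩
    · funext i; fin_cases i <;> simp
    · intro h
      have hh0 := congrFun h 0
      have hh1 := congrFun h 1
      simp only [Matrix.cons_val_zero, Matrix.cons_val_one, Matrix.head_cons] at hh0 hh1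
      have hsa0 : sa = 0 := by linarith
      have hsb0 : sb = 0 := by linarith
      rw [hsa0, hsb0] at hsum1
      norm_num at hsum1
      rcases hsum1 with h' | h'
      · linarith
      · rw [h'] at hscsq
        norm_num at hscsq
        linarith
    · simp [dotProduct, Fin.sum_univ_three]
      linear_combination hsum1
    · simpa using hscneg
    · ext i j
      fin_cases i <;> fin_cases j <;> simp [Matrix.smul_apply]
      · linear_combination l₁ * h0sq + hαl - ((1 - sa ^ 2) / 4) * ha1sq
      · linear_combination hpr + (sa * sb / 4) * ha1sq
      · linear_combination hpr + (sa * sb / 4) * ha1sq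
      · linear_combination l₁ * hsbsq + hβl - ((1 - sb ^ 2) / 4) * ha1sq
    · simp [dotProduct, Fin.sum_univ_three]
      linear_combination hsum1
    · simpa using hscneg
    · ext i j
      fin_cases i <;> fin_cases j <;> simp [Matrix.smul_apply]
      · linear_combination l₁ * h0sq + hαl - ((1 - sa ^ 2) / 4) * ha1sq
      · linear_combination hpr + (sa * sb / 4) * ha1sq
      · linear_combination hpr + (sa * sb / 4) * ha1sq
      · linear_combination l₁ * hsbsq + hβl - ((1 - sb ^ 2) / 4) * ha1sq
    · intro χ hcunit hcneg hc
      have hc00 := congrFun (congrFun hc 0) 0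
      have hc01 := congrFun (congrFun hc 0) 1
      have hc11 := congrFun (congrFun hc 1) 1
      simp [Matrix.smul_apply] at hc00 hc01 hc11
      have hcunit' : χ 0 ^ 2 + χ 1 ^ 2 + χ 2 ^ 2 = 1 := by
        simpa [dotProduct, Fin.sum_univ_three, sq] using hcunit
      have hχ0 : χ 0 ^ 2 = α := mul_left_cancel₀ hl1ne
        (by linear_combination hc00 - hαl + ((1 - χ 0 ^ 2) / 4) * ha1sq)
      have hχ1 : χ 1 ^ 2 = β := mul_left_cancel₀ hl1ne
        (by linear_combination hc11 - hβl + ((1 - χ 1 ^ 2) / 4) * ha1sq)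
      have hχpr : l₁ * (χ 0 * χ 1) = -q := by
        linear_combination hc01 - (χ 0 * χ 1 / 4) * ha1sq
      have hχ2sq : χ 2 ^ 2 = t := by
        linarith [hcunit', hχ0, hχ1, hsum]
      have hχ2 : χ 2 = sc := by
        have hf : (χ 2 - sc) * (χ 2 + sc) = 0 := by
          linear_combination hχ2sq - hscsq
        rcases mul_eq_zero.mp hf with h | h
        · linarith
        · linarith
      have hf0 : (χ 0 - sa) * (χ 0 + sa) = 0 := by linear_combination hχ0 - h0sq
      have hprχ : l₁ * (χ 0 * χ 1) = l₁ * (sa * sb) := by rw [hpr, hχpr]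
      have hprχ' : χ 0 * χ 1 = sa * sb := mul_left_cancel₀ hl1ne hprχ
      by_cases hα0 : α = 0
      · -- sa = 0, χ 0 = 0
        have hsa0 : sa = 0 := by
          have : sa ^ 2 = 0 := by rw [h0sq, hα0]
          exact (pow_eq_zero_iff two_ne_zero).mp this
        have hχ00 : χ 0 = 0 := by
          have : χ 0 ^ 2 = 0 := by rw [hχ0, hα0]
          exact (pow_eq_zero_iff two_ne_zero).mp this
        have hf1 : (χ 1 - sb) * (χ 1 + sb) = 0 := by linear_combination hχ1 - hsbsq
        rcases mul_eq_zero.mp hf1 with h | h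
        · left
          funext i; fin_cases i
          · simpa using hχ00.trans hsa0.symm
          · simpa using sub_eq_zero.mp h
          · simpa using hχ2
        · right
          funext i; fin_cases i
          · simp [hχ00, hsa0]
          · have : χ 1 = -sb := by linarith
            simpa using this
          · simpa using hχ2
      · have hαpos : 0 < α := lt_of_le_of_ne hαnn (Ne.symm hα0)
        have hsane : sa ≠ 0 := by
          intro h
          rw [h] at h0sq
          simp at h0sq
          exact hα0 h0sq.symm
        rcases mul_eq_zero.mp hf0 with h | h
        · left
          have hχ0eq : χ 0 = sa := sub_eq_zero.mp h
          have hχ1eq : χ 1 = sb := by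
            have := hprχ'
            rw [hχ0eq] at this
            exact mul_left_cancel₀ hsane this
          funext i; fin_cases i
          · simpa using hχ0eq
          · simpa using hχ1eq
          · simpa using hχ2
        · right
          have hχ0eq : χ 0 = -sa := by linarith
          have hχ1eq : χ 1 = -sb := by
            have h2 := hprχ'
            rw [hχ0eq] at h2
            have : sa * -(χ 1) = sa * sb := by linear_combination h2
            have := mul_left_cancel₀ hsane this
            linarith
          funext i; fin_cases i
          · simpa using hχ0eq
          · simpa using hχ1eq
          · simpa using hχ2
end

section
/- Let R > 0, ν ∈ ℝ³, and let φ ∈ ℝ³ be a unit vector. Let C ∈ ℝ^{2×2} be symmetric positive definite with largest eigenvalue λ₁, set a₁ := 2√λ₁, and let μ ∈ ℝ². Suppose ψ ∈ ℝ³ is a unit vector with ψ_z ≠ 0 such that C = (a₁²/4)·[[1 − ψ_x², −ψ_x ψ_y], [−ψ_x ψ_y, 1 − ψ_y²]]. Let Q̃ ∈ ℝ^{3×3} be an orthogonal matrix with Q̃·φ = ψ, let Q ∈ ℝ^{2×3} consist of the first two rows of Q̃, and set σ := a₁/R and q := μ − σ·Q·ν. Then the affine map x ↦ σ·Q·x +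 q maps the solid circle Circle(ν, φ, R) := {x ∈ ℝ³ : ‖x − ν‖ ≤ R and (x − ν)·φ = 0} onto the solid ellipse E(μ, C) := {p ∈ ℝ² : (p − μ)ᵀ C⁻¹ (p − μ) ≤ 4}. -/
open Matrix

lemma owa_ortho (Qf : Matrix (Fin 3) (Fin 3) ℝ) (hQf : Qfᵀ * Qf = 1) (u v : Fin 3 → ℝ) :
    (Qf *ᵥ u) ⬝ᵥ (Qf *ᵥ v) = u ⬝ᵥ v := by
  rw [Matrix.dotProduct_mulVec, ← Matrix.mulVec_transpose, Matrix.mulVec_mulVec, hQf,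
    Matrix.one_mulVec]

lemma owa_key (ψ w : Fin 3 → ℝ) (hψ : ψ 0 ^ 2 + ψ 1 ^ 2 + ψ 2 ^ 2 = 1)
    (hw : w 0 * ψ 0 + w 1 * ψ 1 + w 2 * ψ 2 = 0) :
    (1 - ψ 1 ^ 2) * w 0 ^ 2 + 2 * (ψ 0 * ψ 1) * (w 0 * w 1) + (1 - ψ 0 ^ 2) * w 1 ^ 2
      = ψ 2 ^ 2 * (w 0 ^ 2 + w 1 ^ 2 + w 2 ^ 2) := by
  linear_combination (-(w 0 ^ 2 + w 1 ^ 2)) * hψ +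
    (w 0 * ψ 0 + w 1 * ψ 1 - w 2 * ψ 2) * hw

set_option maxHeartbeats 1000000 in

/-- forward direction of the paper's Lemma 2, onewheelalign:
Let R > 0, ν ∈ ℝ³, φ ∈ ℝ³ a unit vector; C ∈ ℝ^{2×2} symmetric positive
definite with largest eigenvalue λ₁, a₁ := 2√λ₁, μ ∈ ℝ². Suppose ψ is a unit
vector with ψ_z ≠ 0 and C = (a₁²/4)·[[1 − ψx², −ψxψy], [−ψxψy, 1 − ψy²]].
Let Qf be orthogonal with Qf·φ = ψ, Q its first two rows, σ := a₁/R and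
q := μ − σ·Q·ν. Then x ↦ σ·Q·x + q maps the solid circle
Circle(ν, φ, R) = {x : ‖x − ν‖ ≤ R, (x − ν)·φ = 0} onto the solid ellipse
E(μ, C) = {p : (p − μ)ᵀ C⁻¹ (p − μ) ≤ 4}. -/
theorem one_wheel_alignment
    (R : ℝ) (hR : 0 < R) (ν φ : Fin 3 → ℝ) (hφ : φ ⬝ᵥ φ = 1)
    (C : Matrix (Fin 2) (Fin 2) ℝ) (hsym : C.IsSymm) (hpd : C.PosDef)
    (l₁ : ℝ) (hl₁ : l₁ ∈ spectrum ℝ C) (hmax : ∀ l ∈ spectrum ℝ C, l ≤ l₁)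
    (a₁ : ℝ) (ha₁ : a₁ = 2 * Real.sqrt l₁) (μ : Fin 2 → ℝ)
    (ψ : Fin 3 → ℝ) (hψ : ψ ⬝ᵥ ψ = 1) (hψz : ψ 2 ≠ 0)
    (hCψ : C = (a₁ ^ 2 / 4) •
      !![1 - ψ 0 ^ 2, -(ψ 0 * ψ 1); -(ψ 0 * ψ 1), 1 - ψ 1 ^ 2])
    (Qf : Matrix (Fin 3) (Fin 3) ℝ) (hQf : Qfᵀ * Qf = 1) (hQfφ : Qf *ᵥ φ = ψ)
    (Q : Matrix (Fin 2) (Fin 3) ℝ) (hQ : Q = Qf.submatrix Fin.castSucc id)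
    (σ : ℝ) (hσ : σ = a₁ / R) (q : Fin 2 → ℝ) (hq : q = μ - σ • (Q *ᵥ ν)) :
    (fun x : Fin 3 → ℝ => σ • (Q *ᵥ x) + q) ''
        {x : Fin 3 → ℝ | Real.sqrt ((x - ν) ⬝ᵥ (x - ν)) ≤ R ∧ (x - ν) ⬝ᵥ φ = 0} =
      {p : Fin 2 → ℝ | (p - μ) ⬝ᵥ C⁻¹ *ᵥ (p - μ) ≤ 4} := by
  have hψ3 : ψ 0 ^ 2 + ψ 1 ^ 2 + ψ 2 ^ 2 = 1 := by
    simpa [dotProduct, Fin.sum_univ_three, sq] using hψ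
  have ha₁0 : a₁ ≠ 0 := by
    intro h
    have hd := hpd.det_pos
    rw [hCψ, h] at hd
    norm_num [Matrix.det_fin_two_of] at hd
  have hσ0 : σ ≠ 0 := by
    rw [hσ]; exact div_ne_zero ha₁0 hR.ne'
  -- inverse of C
  obtain ⟨D, hD⟩ : ∃ D : Matrix (Fin 2) (Fin 2) ℝ,
      D = (4 / (a₁ ^ 2 * ψ 2 ^ 2)) • !![1 - ψ 1 ^ 2, ψ 0 * ψ 1; ψ 0 * ψ 1, 1 - ψ 0 ^ 2] :=
    ⟨_, rfl⟩
  have hCD : C * D = 1 := by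
    rw [hCψ, hD]
    ext i j
    fin_cases i <;> fin_cases j <;>
      · simp [Matrix.mul_apply, Fin.sum_univ_two]
        field_simp
        first
          | ring1
          | linear_combination (-(4*a₁^2)) * hψ3
          | linear_combination (-(16*a₁^4*ψ 2^2)) * hψ3
          | linear_combination (-1) * hψ3
  have hCinv : C⁻¹ = D := Matrix.inv_eq_right_inv hCD
  -- quadratic form of D
  have hform : ∀ v : Fin 2 → ℝ, v ⬝ᵥ (D *ᵥ v) =
      (4 / (a₁ ^ 2 * ψ 2 ^ 2)) *
        ((1 - ψ 1 ^ 2) * v 0 ^ 2 + 2 * (ψ 0 * ψ 1) * (v 0 * v 1) + (1 - ψ 0 ^ 2) * v 1 ^ 2) := by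
    intro v
    simp [hD, dotProduct, Matrix.mulVec, Fin.sum_univ_two]
    ring
  -- rows of Q
  have hQrow : ∀ z : Fin 3 → ℝ, Q *ᵥ z = ![(Qf *ᵥ z) 0, (Qf *ᵥ z) 1] := by
    intro z
    rw [hQ]
    funext i
    fin_cases i <;> simp [Matrix.mulVec, dotProduct, Matrix.submatrix_apply]
  have hQfQft : Qf * Qfᵀ = 1 := mul_eq_one_comm.mp hQf
  ext p
  constructor
  · rintro ⟨x, ⟨hx1, hx2⟩, rfl⟩
    obtain ⟨u, hu⟩ : ∃ u : Fin 3 → ℝ, u = x - ν := ⟨_, rfl⟩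
    rw [← hu] at hx1 hx2
    obtain ⟨w, hw⟩ : ∃ w : Fin 3 → ℝ, w = Qf *ᵥ u := ⟨_, rfl⟩
    have hpμ : σ • (Q *ᵥ x) + q - μ = σ • (Q *ᵥ u) := by
      rw [hq, hu, Matrix.mulVec_sub, smul_sub]; abel
    have hwψ : w 0 * ψ 0 + w 1 * ψ 1 + w 2 * ψ 2 = 0 := by
      have h1 := owa_ortho Qf hQf u φ
      rw [hQfφ, ← hw, hx2] at h1
      simpa [dotProduct, Fin.sum_univ_three] using h1
    have hww : w ⬝ᵥ w = u ⬝ᵥ u := by rw [hw]; exact owa_ortho Qf hQf u u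
    have huu3 : u ⬝ᵥ u = u 0 ^ 2 + u 1 ^ 2 + u 2 ^ 2 := by
      simp [dotProduct, Fin.sum_univ_three]; ring
    have huu0 : 0 ≤ u ⬝ᵥ u := by rw [huu3]; positivity
    have huuR : u ⬝ᵥ u ≤ R ^ 2 := by
      have h2 := Real.sq_sqrt huu0
      nlinarith [Real.sqrt_nonneg (u ⬝ᵥ u)]
    have hwwR : w 0 ^ 2 + w 1 ^ 2 + w 2 ^ 2 ≤ R ^ 2 := by
      have h3 : w ⬝ᵥ w = w 0 ^ 2 + w 1 ^ 2 + w 2 ^ 2 := by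
        simp [dotProduct, Fin.sum_univ_three]; ring
      rw [← h3, hww]; exact huuR
    simp only [Set.mem_setOf_eq, hpμ, hCinv, hQrow u, ← hw]
    rw [Matrix.mulVec_smul, smul_dotProduct, dotProduct_smul, hform]
    simp only [Matrix.cons_val_zero, Matrix.cons_val_one, Matrix.head_cons]
    rw [owa_key ψ w hψ3 hwψ, smul_smul, smul_eq_mul]
    have key : σ * σ * (4 / (a₁ ^ 2 * ψ 2 ^ 2) * (ψ 2 ^ 2 * (w 0 ^ 2 + w 1 ^ 2 + w 2 ^ 2)))
        = 4 * (w 0 ^ 2 + w 1 ^ 2 + w 2 ^ 2) / R ^ 2 := by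
      rw [hσ]; field_simp
    rw [key, div_le_iff₀ (by positivity)]
    linarith
  · intro hp
    simp only [Set.mem_setOf_eq, hCinv] at hp
    obtain ⟨v, hv⟩ : ∃ v : Fin 2 → ℝ, v = σ⁻¹ • (p - μ) := ⟨_, rfl⟩
    obtain ⟨w, hw⟩ : ∃ w : Fin 3 → ℝ,
        w = ![v 0, v 1, -(v 0 * ψ 0 + v 1 * ψ 1) / ψ 2] := ⟨_, rfl⟩
    obtain ⟨u, hu⟩ : ∃ u : Fin 3 → ℝ, u = Qfᵀ *ᵥ w := ⟨_, rfl⟩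
    have hw0 : w 0 = v 0 := by rw [hw]; rfl
    have hw1 : w 1 = v 1 := by rw [hw]; rfl
    have hw2 : w 2 = -(v 0 * ψ 0 + v 1 * ψ 1) / ψ 2 := by rw [hw]; rfl
    have hwψ : w 0 * ψ 0 + w 1 * ψ 1 + w 2 * ψ 2 = 0 := by
      rw [hw0, hw1, hw2]; field_simp; ring
    have hQfu : Qf *ᵥ u = w := by
      rw [hu, Matrix.mulVec_mulVec, hQfQft, Matrix.one_mulVec]
    have hpμv : p - μ = σ • v := by
      rw [hv, smul_smul, mul_inv_cancel₀ hσ0, one_smul]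
    rw [hpμv, Matrix.mulVec_smul, smul_dotProduct, dotProduct_smul, hform,
      ← hw0, ← hw1, owa_key ψ w hψ3 hwψ, smul_smul, smul_eq_mul] at hp
    have key : σ * σ * (4 / (a₁ ^ 2 * ψ 2 ^ 2) * (ψ 2 ^ 2 * (w 0 ^ 2 + w 1 ^ 2 + w 2 ^ 2)))
        = 4 * (w 0 ^ 2 + w 1 ^ 2 + w 2 ^ 2) / R ^ 2 := by
      rw [hσ]; field_simp
    rw [key, div_le_iff₀ (by positivity)] at hp
    have hwwR : w 0 ^ 2 + w 1 ^ 2 + w 2 ^ 2 ≤ R ^ 2 := by linarith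
    refine ⟨ν + u, ⟨?_, ?_⟩, ?_⟩
    · have h1 : ν + u - ν = u := by abel
      rw [h1]
      have huw : u ⬝ᵥ u = w 0 ^ 2 + w 1 ^ 2 + w 2 ^ 2 := by
        have h2 := owa_ortho Qf hQf u u
        rw [hQfu] at h2
        rw [← h2]
        simp [dotProduct, Fin.sum_univ_three]; ring
      rw [huw]
      calc Real.sqrt (w 0 ^ 2 + w 1 ^ 2 + w 2 ^ 2) ≤ Real.sqrt (R ^ 2) :=
            Real.sqrt_le_sqrt hwwR
        _ = R := Real.sqrt_sq hR.le
    · have h1 : ν + u - ν = u := by abel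
      rw [h1]
      have h2 := owa_ortho Qf hQf u φ
      rw [hQfu, hQfφ] at h2
      rw [← h2]
      simpa [dotProduct, Fin.sum_univ_three] using hwψ
    · show σ • (Q *ᵥ (ν + u)) + q = p
      rw [hq, Matrix.mulVec_add, smul_add, hQrow u, hQfu]
      have hvw : ![w 0, w 1] = v := by
        funext i; fin_cases i <;> simp [hw0, hw1]
      rw [hvw, ← hpμv]
      abel
end
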